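/- The image ℤ[ζ₅]⋆ = {z⋆ : z ∈ ℤ[ζ₅]} is dense in ℝ² × (ℤ/5ℤ). -/

import Mathlib

open scoped Pointwise

noncomputable section

instance : TopologicalSpace (ZMod 5) := ⊥
instance : DiscreteTopology (ZMod 5) := ⟨rfl⟩

/-- The primitive 5th root of unity ζ₅ = exp(2πi/5). -/
def zeta5 : ℂ := Complex.exp (2 * Real.pi * Complex.I / 5)

/-- The ring of cyclotomic integers ℤ[ζ₅], as the set of ℤ-combinations of 1, ζ₅, ζ₅², ζ₅³. -/
def Zzeta5 : Set ℂ := {z | ∃ a : Fin 4 → ℤ, z = ∑ j : Fin 4, (a j : ℂ) * zeta5 ^ (j : ℕ)}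

/-- The (unique) integer coefficients of an element of ℤ[ζ₅] w.r.t. the basis 1, ζ₅, ζ₅², ζ₅³. -/
def coeffs (z : ℂ) : Fin 4 → ℤ :=
  open Classical in
  if h : z ∈ Zzeta5 then h.choose else 0

/-- The star map z ↦ (σ₂(z), Σ aⱼ(z) mod 5), with σ₂ the Galois automorphism ζ₅ ↦ ζ₅². -/
def starMap (z : ℂ) : ℂ × ZMod 5 :=
  (∑ j : Fin 4, (coeffs z j : ℂ) * zeta5 ^ (2 * (j : ℕ)),
   ∑ j : Fin 4, ((coeffs z j : ℤ) : ZMod 5))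

/-- The regular pentagon P: the convex hull of the 5th roots of unity. -/
def pent : Set ℂ := convexHull ℝ {z : ℂ | z ^ 5 = 1}

/-- The golden ratio τ = (1+√5)/2. -/
def tauR : ℝ := (1 + Real.sqrt 5) / 2

/-- The Penrose window W_P ⊂ ℝ² × ℤ/5ℤ. -/
def WP : Set (ℂ × ZMod 5) :=
  (pent ×ˢ ({1} : Set (ZMod 5))) ∪ ((-pent) ×ˢ ({2} : Set (ZMod 5))) ∪
    ((tauR • pent) ×ˢ ({3} : Set (ZMod 5))) ∪ ((-(tauR • pent)) ×ˢ ({4} : Set (ZMod 5)))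

/-- The shifted window W_P^u = (u, 0) + W_P. -/
def WPu (u : ℂ) : Set (ℂ × ZMod 5) := (fun p => ((u, (0 : ZMod 5)) + p)) '' WP

/-- The model set Λ_P^u = {z ∈ ℤ[ζ₅] : z⋆ ∈ W_P^u}. -/
def LambdaPu (u : ℂ) : Set ℂ := {z | z ∈ Zzeta5 ∧ starMap z ∈ WPu u}

/-- Λ_P^u is generic if the boundary of W_P^u contains no point of ℤ[ζ₅]⋆. -/
def IsGeneric (u : ℂ) : Prop := ∀ z ∈ Zzeta5, starMap z ∉ frontier (WPu u)

/-- A Penrose model set: a translate t + Λ_P^u of a generic Λ_P^u. -/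
def IsPMS (Λ : Set ℂ) : Prop := ∃ t u : ℂ, IsGeneric u ∧ Λ = (fun z => t + z) '' LambdaPu u

/-- v is parallel to u. -/
def Par (u v : ℂ) : Prop := ∃ r : ℝ, r ≠ 0 ∧ v = r • u

/-- A ℤ[ζ₅]-direction: a direction parallel to a nonzero element of ℤ[ζ₅]. -/
def IsZ5Direction (u : ℂ) : Prop := ∃ z ∈ Zzeta5, z ≠ 0 ∧ Par u z

/-- The line through p in direction u. -/
def line (u p : ℂ) : Set ℂ := {x | ∃ t : ℝ, x = p + t • u}

/-- The X-ray of F in direction u, as a function of the base point of the line. -/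
def Xray (u : ℂ) (F : Set ℂ) : ℂ → ℕ := fun p => (F ∩ line u p).ncard

/-- A convex subset C of Λ: a finite subset with C = conv(C) ∩ Λ. -/
def IsConvexSubset (Λ C : Set ℂ) : Prop :=
  C.Finite ∧ C ⊆ Λ ∧ C = convexHull ℝ C ∩ Λ

-- === aux ===
lemma prim5 : IsPrimitiveRoot zeta5 5 := Complex.isPrimitiveRoot_exp 5 (by norm_num)

lemma zeta5_geom : 1 + zeta5 + zeta5^2 + zeta5^3 + zeta5^4 = 0 := by
  have := prim5.geom_sum_eq_zero (by norm_num)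
  simpa [Finset.sum_range_succ] using this

lemma zeta5_pow5 : zeta5 ^ 5 = 1 := prim5.pow_eq_one

lemma zeta5_pow6 : zeta5 ^ 6 = zeta5 := by
  have : zeta5 ^ 6 = zeta5 ^ 5 * zeta5 := by ring
  rw [this, zeta5_pow5, one_mul]

lemma zeta5_pow (n : ℕ) : zeta5 ^ n = Complex.exp (((2 * Real.pi * n / 5 : ℝ) : ℂ) * Complex.I) := by
  rw [zeta5, ← Complex.exp_nat_mul]
  push_cast
  ring_nf

lemma zeta5_pow_re (n : ℕ) : (zeta5 ^ n).re = Real.cos (2 * Real.pi * n / 5) := by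
  rw [zeta5_pow, Complex.exp_ofReal_mul_I_re]

lemma zeta5_pow_im (n : ℕ) : (zeta5 ^ n).im = Real.sin (2 * Real.pi * n / 5) := by
  rw [zeta5_pow, Complex.exp_ofReal_mul_I_im]

lemma zeta5_im_pos : 0 < zeta5.im := by
  have := zeta5_pow_im 1
  simp at this
  rw [this]
  apply Real.sin_pos_of_pos_of_lt_pi <;> nlinarith [Real.pi_pos]

lemma zeta5_sq_add_cube : zeta5^2 + zeta5^3 = -(tauR : ℂ) := by
  have h2re : (zeta5^2).re = Real.cos (2 * Real.pi * 2 / 5) := zeta5_pow_re 2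
  have h3re : (zeta5^3).re = Real.cos (2 * Real.pi * 3 / 5) := zeta5_pow_re 3
  have h2im : (zeta5^2).im = Real.sin (2 * Real.pi * 2 / 5) := zeta5_pow_im 2
  have h3im : (zeta5^3).im = Real.sin (2 * Real.pi * 3 / 5) := zeta5_pow_im 3
  have e2 : 2 * Real.pi * 2 / 5 = Real.pi - Real.pi / 5 := by ring
  have e3 : 2 * Real.pi * 3 / 5 = Real.pi + Real.pi / 5 := by ring
  apply Complex.ext
  · rw [Complex.add_re, h2re, h3re, e2, e3, Real.cos_pi_sub, add_comm Real.pi, Real.cos_add_pi,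
      Real.cos_pi_div_five]
    simp [tauR]
    ring
  · rw [Complex.add_im, h2im, h3im, e2, e3, Real.sin_pi_sub, add_comm Real.pi, Real.sin_add_pi]
    simp

lemma minpoly_deg : (minpoly ℚ zeta5).natDegree = 4 := by
  rw [← Polynomial.cyclotomic_eq_minpoly_rat prim5 (by norm_num), Polynomial.natDegree_cyclotomic]
  decide

lemma li5 : LinearIndependent ℚ fun i : Fin 4 => zeta5 ^ (i : ℕ) := by
  have h := linearIndependent_pow (K := ℚ) (S := ℂ) zeta5
  rwa [minpoly_deg] at h

lemma coeff_unique {a b : Fin 4 → ℤ}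
    (h : ∑ j : Fin 4, (a j : ℂ) * zeta5 ^ (j : ℕ) = ∑ j : Fin 4, (b j : ℂ) * zeta5 ^ (j : ℕ)) :
    a = b := by
  have h0 : ∑ j : Fin 4, ((a j - b j : ℚ)) • zeta5 ^ (j : ℕ) = 0 := by
    rw [← sub_eq_zero] at h
    rw [← h, ← Finset.sum_sub_distrib]
    congr 1; ext j
    push_cast [Rat.smul_def]
    ring
  have hli := Fintype.linearIndependent_iff.mp li5 _ h0
  funext j
  exact_mod_cast sub_eq_zero.mp (hli j)

lemma coeffs_eq (a : Fin 4 → ℤ) :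
    coeffs (∑ j : Fin 4, (a j : ℂ) * zeta5 ^ (j : ℕ)) = a := by
  set z := ∑ j : Fin 4, (a j : ℂ) * zeta5 ^ (j : ℕ) with hz
  have hmem : z ∈ Zzeta5 := ⟨a, rfl⟩
  have hch : coeffs z = hmem.choose := by rw [coeffs, dif_pos hmem]
  rw [hch]
  exact coeff_unique (hmem.choose_spec.symm)

lemma irrational_Q : Irrational (3 - tauR) := by
  have h5 : Irrational (Real.sqrt 5) := (by norm_num : Nat.Prime 5).irrational_sqrt
  have : (3 : ℝ) - tauR = ((5:ℚ)/2 : ℚ) + (-(1/2) : ℚ) * Real.sqrt 5 := by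
    rw [tauR]; push_cast; ring
  rw [this]
  exact ((h5.ratCast_mul (by norm_num)).ratCast_add _)

lemma denseG : Dense ((AddSubgroup.closure {(5 : ℝ), 3 - tauR} : AddSubgroup ℝ) : Set ℝ) := by
  rcases (AddSubgroup.closure {(5 : ℝ), 3 - tauR}).dense_or_cyclic with h | ⟨a, ha⟩
  · exact h
  · exfalso
    have h5 : (5:ℝ) ∈ AddSubgroup.closure {(5 : ℝ), 3 - tauR} :=
      AddSubgroup.subset_closure (by simp)
    have hq : (3 - tauR) ∈ AddSubgroup.closure {(5 : ℝ), 3 - tauR} :=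
      AddSubgroup.subset_closure (by simp)
    rw [ha, AddSubgroup.mem_closure_singleton] at h5 hq
    obtain ⟨m, hm⟩ := h5
    obtain ⟨n, hn⟩ := hq
    have hm0 : m ≠ 0 := by rintro rfl; simp at hm
    have : (3 - tauR) = ((n * 5 / m : ℚ) : ℝ) := by
      push_cast
      rw [← hn, ← hm]
      field_simp
      ring
    exact irrational_Q ⟨_, this.symm⟩

lemma approxG (x : ℝ) {ε : ℝ} (hε : 0 < ε) :
    ∃ m n : ℤ, |(5 * m + (3 - tauR) * n) - x| < ε := by
  obtain ⟨y, hy1, hy2⟩ := Metric.dense_iff.mp denseG x ε hε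
  rw [SetLike.mem_coe, AddSubgroup.mem_closure_pair] at hy2
  obtain ⟨m, n, hmn⟩ := hy2
  refine ⟨m, n, ?_⟩
  have h' : |y - x| < ε := by
    rw [Metric.mem_ball, Real.dist_eq] at hy1
    exact hy1
  rw [← hmn] at h'
  convert h' using 2
  rw [zsmul_eq_mul, zsmul_eq_mul]; ring

lemma starfirst (K m₁ n₁ m₂ n₂ : ℤ) :
    ((K + 5*m₁ + 2*n₁ - n₂ : ℤ) : ℂ) + ((-n₂ : ℤ) : ℂ) * zeta5^2 + ((-n₁ : ℤ) : ℂ) * zeta5^4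
      + ((-n₁ + 5*m₂ + 2*n₂ : ℤ) : ℂ) * zeta5^6
    = (K : ℂ) + ((5*m₁ + (3 - tauR)*n₁ : ℝ) : ℂ) + ((5*m₂ + (3 - tauR)*n₂ : ℝ) : ℂ) * zeta5 := by
  have h2 := zeta5_sq_add_cube
  have h3 := zeta5_geom
  have h6 := zeta5_pow6
  push_cast
  linear_combination ((n₁ : ℂ) + (n₂ : ℂ) * zeta5) * h2 - ((n₁ : ℂ) + (n₂ : ℂ)) * h3
    + (-(n₁ : ℂ) + 2*(n₂ : ℂ) + 5*(m₂ : ℂ)) * h6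


theorem starImage_dense : Dense (starMap '' Zzeta5) := by
  rw [dense_iff_inter_open]
  rintro U hU ⟨⟨w, k⟩, hwk⟩
  obtain ⟨u, v, hu, hv, hwu, hkv, huv⟩ := isOpen_prod_iff.mp hU w k hwk
  obtain ⟨ε, hε, hball⟩ := Metric.isOpen_iff.mp hu w hwu
  set K : ℤ := (k.val : ℤ) with hK
  have hne : zeta5.im ≠ 0 := ne_of_gt zeta5_im_pos
  set y0 : ℝ := (w - K).im / zeta5.im with hy0
  set x0 : ℝ := (w - K).re - y0 * zeta5.re with hx0
  have hdecomp : w = (K : ℂ) + (x0 : ℂ) + (y0 : ℂ) * zeta5 := by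
    apply Complex.ext
    · simp [hx0, Complex.add_re, Complex.mul_re]
      ring
    · simp [hx0, hy0, Complex.add_im, Complex.mul_im]
      field_simp
  have habs : (0:ℝ) < 1 + ‖zeta5‖ := by positivity
  set δ : ℝ := ε / (2 * (1 + ‖zeta5‖)) with hδdef
  have hδ : 0 < δ := by positivity
  obtain ⟨m₁, n₁, h1⟩ := approxG x0 hδ
  obtain ⟨m₂, n₂, h2⟩ := approxG y0 hδ
  set a : Fin 4 → ℤ := ![K + 5*m₁ + 2*n₁ - n₂, -n₂, -n₁, -n₁ + 5*m₂ + 2*n₂] with ha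
  set z := ∑ j : Fin 4, (a j : ℂ) * zeta5 ^ (j : ℕ) with hzdef
  have hc : coeffs z = a := coeffs_eq a
  refine ⟨starMap z, huv ⟨?_, ?_⟩, ⟨z, ⟨a, rfl⟩, rfl⟩⟩
  · -- first coordinate in u
    apply hball
    have hfst : (starMap z).1
        = (K : ℂ) + ((5*m₁ + (3 - tauR)*n₁ : ℝ) : ℂ) + ((5*m₂ + (3 - tauR)*n₂ : ℝ) : ℂ) * zeta5 := by
      show (∑ j : Fin 4, (coeffs z j : ℂ) * zeta5 ^ (2 * (j : ℕ))) = _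
      rw [hc, Fin.sum_univ_four]
      simp only [ha, Matrix.cons_val_zero, Matrix.cons_val_one, Matrix.head_cons,
        Matrix.cons_val_two, Matrix.tail_cons, Matrix.cons_val_three]
      have e0 : ((0 : Fin 4) : ℕ) = 0 := rfl
      have e1 : ((1 : Fin 4) : ℕ) = 1 := rfl
      have e2 : ((2 : Fin 4) : ℕ) = 2 := rfl
      have e3 : ((3 : Fin 4) : ℕ) = 3 := rfl
      rw [e0, e1, e2, e3]
      have hs := starfirst K m₁ n₁ m₂ n₂
      push_cast at hs ⊢
      norm_num
      linear_combination hs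
    rw [Metric.mem_ball, Complex.dist_eq, hfst]
    rw [hdecomp]
    have heq : (K : ℂ) + ((5*m₁ + (3 - tauR)*n₁ : ℝ) : ℂ) + ((5*m₂ + (3 - tauR)*n₂ : ℝ) : ℂ) * zeta5
        - ((K : ℂ) + (x0 : ℂ) + (y0 : ℂ) * zeta5)
        = (((5*m₁ + (3 - tauR)*n₁ - x0 : ℝ)) : ℂ) + (((5*m₂ + (3 - tauR)*n₂ - y0 : ℝ)) : ℂ) * zeta5 := by
      push_cast; ring
    rw [heq]
    calc ‖_‖ ≤ ‖(((5*m₁ + (3 - tauR)*n₁ - x0 : ℝ)) : ℂ)‖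
          + ‖(((5*m₂ + (3 - tauR)*n₂ - y0 : ℝ)) : ℂ) * zeta5‖ := norm_add_le _ _
      _ = |5*m₁ + (3 - tauR)*n₁ - x0| + |5*m₂ + (3 - tauR)*n₂ - y0| * ‖zeta5‖ := by
          rw [norm_mul, Complex.norm_real, Complex.norm_real, Real.norm_eq_abs, Real.norm_eq_abs]
      _ < δ + δ * ‖zeta5‖ := by
          have hz0 : (0:ℝ) ≤ ‖zeta5‖ := norm_nonneg _
          have := mul_le_mul_of_nonneg_right (le_of_lt h2) hz0
          push_cast at h1 h2 ⊢
          nlinarith [norm_nonneg zeta5]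
      _ ≤ ε := by
          rw [hδdef]
          have : ε / (2 * (1 + ‖zeta5‖)) * (1 + ‖zeta5‖) = ε / 2 := by
            field_simp
          nlinarith [norm_nonneg zeta5, this]
  · -- second coordinate = k
    have hsnd : (starMap z).2 = k := by
      show (∑ j : Fin 4, ((coeffs z j : ℤ) : ZMod 5)) = k
      rw [hc, Fin.sum_univ_four]
      simp only [ha, Matrix.cons_val_zero, Matrix.cons_val_one, Matrix.head_cons,
        Matrix.cons_val_two, Matrix.tail_cons, Matrix.cons_val_three]
      have hKk : ((k.val : ℕ) : ZMod 5) = k := ZMod.natCast_rightInverse k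
      push_cast
      have h50 : (5 : ZMod 5) = 0 := by decide
      rw [h50]
      ring_nf
      rw [hK]
      push_cast
      exact hKk
    rw [hsnd]
    exact hkv


end
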